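/- Let m ≥ 2 and let J be a nonempty subset of {1,...,m-1}. Define s_i = t_i q if i ∈ J and s_i = t_i otherwise. Then for n ≥ |J|, H_n(s_1,...,s_{m-1}) = Σ_{i=0}^{|J|} e_i(t_J) (-1)^i ((q)_n/(q)_{n-i}) H_{n-i}(t_1,...,t_{m-1}), where e_i(t_J) is the i-th elementary symmetric polynomial in the variables {t_j : j ∈ J}. -/

import Mathlib

/-- `(q)_n = (1-q)(1-q^2)⋯(1-q^n)`, with `(q)_0 = 1`. -/
noncomputable def qPoch {K : Type*} [Field K] (q : K) (n : ℕ) : K :=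
  ∏ j ∈ Finset.range n, (1 - q ^ (j + 1))

/-- The Rogers-Szegő polynomial in `m-1` variables. -/
noncomputable def rogersSzegoMV {K : Type*} [Field K] (q : K) (m n : ℕ)
    (t : Fin (m - 1) → K) : K :=
  ∑ k ∈ Finset.Nat.antidiagonalTuple m n,
    (qPoch q n / ∏ i, qPoch q (k i)) *
      ∏ i : Fin (m - 1), t i ^ k (Fin.castLE (Nat.sub_le m 1) i)

/-- Let `m ≥ 2`, let `J ⊆ {1,…,m-1}` be nonempty, and set `s_i = t_i q` for `i ∈ J`,
`s_i = t_i` otherwise.  Then for `n ≥ |J|`,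
`H_n(s_1,…,s_{m-1}) = Σ_{i=0}^{|J|} e_i(t_J) (-1)^i ((q)_n/(q)_{n-i}) H_{n-i}(t_1,…,t_{m-1})`. -/
lemma one_sub_X_pow_ne_zero (j : ℕ) : (1 - (RatFunc.X : RatFunc ℚ) ^ (j + 1)) ≠ 0 := by
  have h : (1 - (RatFunc.X : RatFunc ℚ) ^ (j + 1)) =
      algebraMap (Polynomial ℚ) (RatFunc ℚ) (1 - Polynomial.X ^ (j + 1)) := by
    simp [RatFunc.algebraMap_X]
  rw [h]
  simp only [ne_eq, FaithfulSMul.algebraMap_eq_zero_iff]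
  intro hc
  have := congrArg (fun p => Polynomial.coeff p (j+1)) hc
  simp [Polynomial.coeff_one] at this

lemma qPoch_X_ne_zero (k : ℕ) : qPoch (RatFunc.X : RatFunc ℚ) k ≠ 0 :=
  Finset.prod_ne_zero_iff.mpr fun j _ => one_sub_X_pow_ne_zero j

lemma qPoch_succ {K : Type*} [Field K] (q : K) (k : ℕ) :
    qPoch q (k + 1) = qPoch q k * (1 - q ^ (k + 1)) :=
  Finset.prod_range_succ _ k

lemma key_sum (m n : ℕ) (S : Finset (Fin (m - 1))) (hs : S.card ≤ n)
    (t : Fin (m - 1) → RatFunc ℚ) :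
    ∑ k ∈ Finset.Nat.antidiagonalTuple m n,
      ((qPoch (RatFunc.X : RatFunc ℚ) n / ∏ j, qPoch (RatFunc.X : RatFunc ℚ) (k j)) *
        ∏ i : Fin (m - 1), t i ^ k (Fin.castLE (Nat.sub_le m 1) i)) *
        ∏ i ∈ S, (1 - (RatFunc.X : RatFunc ℚ) ^ k (Fin.castLE (Nat.sub_le m 1) i)) =
    (qPoch (RatFunc.X : RatFunc ℚ) n / qPoch (RatFunc.X : RatFunc ℚ) (n - S.card)) *
      (∏ i ∈ S, t i) * rogersSzegoMV (RatFunc.X : RatFunc ℚ) m (n - S.card) t := by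
  classical
  set q : RatFunc ℚ := RatFunc.X with hq
  set c : Fin (m - 1) → Fin m := Fin.castLE (Nat.sub_le m 1) with hc
  have hcinj : Function.Injective c := Fin.castLE_injective _
  set S' : Finset (Fin m) := S.image c with hS'
  have hS'card : S'.card = S.card := Finset.card_image_of_injective _ hcinj
  have hmemS' : ∀ i : Fin (m-1), c i ∈ S' ↔ i ∈ S := by
    intro i
    simp only [hS', Finset.mem_image]
    constructor
    · rintro ⟨a, ha, hac⟩; rwa [← hcinj hac]
    · intro h; exact ⟨i, h, rfl⟩
  set ind : Fin m → ℕ := fun j => if j ∈ S' then 1 else 0 with hind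
  have hindsum : ∑ j, ind j = S.card := by
    rw [← hS'card]
    simp [hind, Finset.sum_ite_mem]
  -- rewrite products over S as products over S'
  have hprodS : ∀ k : Fin m → ℕ,
      (∏ i ∈ S, (1 - q ^ k (c i))) = ∏ j ∈ S', (1 - q ^ k j) := by
    intro k
    rw [hS', Finset.prod_image (fun a _ b _ h => hcinj h)]
  simp only [hprodS]
  -- Step 1: restrict to tuples positive on S'
  rw [← Finset.sum_filter_of_ne (p := fun k : Fin m → ℕ => ∀ j ∈ S', 1 ≤ k j)
    (by
      intro k _ hne j hj
      by_contra hk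
      push_neg at hk
      interval_cases h : k j
      · exact hne (by rw [Finset.prod_eq_zero hj (by simp [h]), mul_zero]))]
  -- Step 2: the filtered set is the image of the shift map
  have himg : (Finset.Nat.antidiagonalTuple m n).filter (fun k => ∀ j ∈ S', 1 ≤ k j) =
      (Finset.Nat.antidiagonalTuple m (n - S.card)).image (fun k' => k' + ind) := by
    ext k
    simp only [Finset.mem_filter, Finset.mem_image, Finset.Nat.mem_antidiagonalTuple]
    constructor
    · rintro ⟨hksum, hPk⟩
      refine ⟨k - ind, ?_, ?_⟩
      · have hle : ∀ j ∈ Finset.univ, ind j ≤ k j := by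
          intro j _
          by_cases hj : j ∈ S'
          · simpa [hind, hj] using hPk j hj
          · simp [hind, hj]
        have : ∑ j, (k j - ind j) = ∑ j, k j - ∑ j, ind j :=
          Finset.sum_tsub_distrib Finset.univ hle
        simpa [hksum, hindsum] using this
      · funext j
        have : ind j ≤ k j := by
          by_cases hj : j ∈ S'
          · simpa [hind, hj] using hPk j hj
          · simp [hind, hj]
        simp [Nat.sub_add_cancel this]
    · rintro ⟨k', hk'sum, rfl⟩
      constructor
      · have : ∑ j, (k' j + ind j) = (n - S.card) + S.card := by
          rw [Finset.sum_add_distrib, hk'sum, hindsum]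
        simpa [Nat.sub_add_cancel hs] using this
      · intro j hj
        simp [hind, hj]
  rw [himg, Finset.sum_image (fun a _ b _ h => add_left_injective ind h)]
  -- Step 3: pointwise identity and sum
  rw [rogersSzegoMV, Finset.mul_sum]
  refine Finset.sum_congr rfl ?_
  intro k' hk'
  have hptA : ∀ j : Fin m, (k' + ind) j = k' j + ind j := fun j => rfl
  set A : RatFunc ℚ := ∏ j, qPoch q (k' j) with hA
  set B : RatFunc ℚ := ∏ j ∈ S', (1 - q ^ (k' j + 1)) with hB
  have hAne : A ≠ 0 := Finset.prod_ne_zero_iff.mpr fun j _ => qPoch_X_ne_zero _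
  have hBne : B ≠ 0 := Finset.prod_ne_zero_iff.mpr fun j _ => one_sub_X_pow_ne_zero _
  have hdenoms : (∏ j, qPoch q ((k' + ind) j)) = A * B := by
    have : ∀ j : Fin m, qPoch q ((k' + ind) j) =
        qPoch q (k' j) * (if j ∈ S' then (1 - q ^ (k' j + 1)) else 1) := by
      intro j
      by_cases hj : j ∈ S'
      · simp [hptA, hind, hj, qPoch_succ]
      · simp [hptA, hind, hj]
    rw [Finset.prod_congr rfl fun j _ => this j, Finset.prod_mul_distrib, hA, hB]
    congr 1
    simp [Finset.prod_ite_mem]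
  have hBprod : (∏ j ∈ S', (1 - q ^ ((k' + ind) j))) = B := by
    refine Finset.prod_congr rfl ?_
    intro j hj
    simp [hptA, hind, hj]
  have htprod : (∏ i : Fin (m-1), t i ^ ((k' + ind) (c i))) =
      (∏ i : Fin (m-1), t i ^ (k' (c i))) * ∏ i ∈ S, t i := by
    have : ∀ i : Fin (m-1), t i ^ ((k' + ind) (c i)) =
        t i ^ (k' (c i)) * (if i ∈ S then t i else 1) := by
      intro i
      by_cases hi : i ∈ S
      · simp [hptA, hind, (hmemS' i).mpr hi, hi, pow_add]
      · have hci : c i ∉ S' := fun h => hi ((hmemS' i).mp h)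
        simp [hptA, hind, hci, hi]
    rw [Finset.prod_congr rfl fun i _ => this i, Finset.prod_mul_distrib]
    congr 1
    simp [Finset.prod_ite_mem]
  rw [hdenoms, hBprod, htprod]
  have hPoch : qPoch q (n - S.card) ≠ 0 := qPoch_X_ne_zero _
  field_simp
  ring

theorem rogersSzegoMV_q_functional (m n : ℕ) (hm : 2 ≤ m)
    (J : Finset (Fin (m - 1))) (hJ : J.Nonempty) (hn : J.card ≤ n)
    (t : Fin (m - 1) → RatFunc ℚ) :
    rogersSzegoMV (RatFunc.X : RatFunc ℚ) m n
        (fun i => if i ∈ J then t i * RatFunc.X else t i) =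
      ∑ i ∈ Finset.range (J.card + 1),
        (Multiset.esymm (J.val.map t) i) * (-1 : RatFunc ℚ) ^ i *
          (qPoch (RatFunc.X : RatFunc ℚ) n / qPoch (RatFunc.X : RatFunc ℚ) (n - i)) *
          rogersSzegoMV (RatFunc.X : RatFunc ℚ) m (n - i) t := by
  classical
  set q : RatFunc ℚ := RatFunc.X with hq
  set c : Fin (m - 1) → Fin m := Fin.castLE (Nat.sub_le m 1) with hc
  rw [rogersSzegoMV]
  have step1 : ∀ k : Fin m → ℕ,
      (∏ i : Fin (m-1), (if i ∈ J then t i * q else t i) ^ k (c i)) =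
      (∏ i : Fin (m-1), t i ^ k (c i)) *
        ∑ S ∈ J.powerset, (-1 : RatFunc ℚ) ^ S.card * ∏ i ∈ S, (1 - q ^ k (c i)) := by
    intro k
    have h1 : ∀ i : Fin (m-1), (if i ∈ J then t i * q else t i) ^ k (c i) =
        t i ^ k (c i) * (if i ∈ J then q ^ k (c i) else 1) := by
      intro i; by_cases hi : i ∈ J <;> simp [hi, mul_pow]
    rw [Finset.prod_congr rfl fun i _ => h1 i, Finset.prod_mul_distrib]
    congr 1
    rw [Finset.prod_ite_mem, Finset.univ_inter]
    have h2 : ∀ i ∈ J, q ^ k (c i) = (-(1 - q ^ k (c i))) + 1 := by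
      intro i _; ring
    rw [Finset.prod_congr rfl h2, Finset.prod_add]
    refine Finset.sum_congr rfl ?_
    intro S _
    rw [Finset.prod_const_one, mul_one]
    calc ∏ i ∈ S, -(1 - q ^ k (c i))
        = ∏ i ∈ S, ((-1 : RatFunc ℚ) * (1 - q ^ k (c i))) :=
          Finset.prod_congr rfl fun i _ => by ring
      _ = (-1 : RatFunc ℚ) ^ S.card * ∏ i ∈ S, (1 - q ^ k (c i)) := by
          rw [Finset.prod_mul_distrib, Finset.prod_const]
  simp only [← hc, step1]
  -- exchange sums
  have step2 : ∀ k ∈ Finset.Nat.antidiagonalTuple m n,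
      (qPoch q n / ∏ j, qPoch q (k j)) *
        ((∏ i : Fin (m-1), t i ^ k (c i)) *
          ∑ S ∈ J.powerset, (-1 : RatFunc ℚ) ^ S.card * ∏ i ∈ S, (1 - q ^ k (c i))) =
      ∑ S ∈ J.powerset, (-1 : RatFunc ℚ) ^ S.card *
        (((qPoch q n / ∏ j, qPoch q (k j)) * ∏ i : Fin (m-1), t i ^ k (c i)) *
          ∏ i ∈ S, (1 - q ^ k (c i))) := by
    intro k _
    rw [Finset.mul_sum, Finset.mul_sum]
    exact Finset.sum_congr rfl fun S _ => by ring
  rw [Finset.sum_congr rfl step2, Finset.sum_comm]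
  have step3 : ∀ S ∈ J.powerset,
      (∑ k ∈ Finset.Nat.antidiagonalTuple m n, (-1 : RatFunc ℚ) ^ S.card *
        (((qPoch q n / ∏ j, qPoch q (k j)) * ∏ i : Fin (m-1), t i ^ k (c i)) *
          ∏ i ∈ S, (1 - q ^ k (c i)))) =
      (-1 : RatFunc ℚ) ^ S.card * ((qPoch q n / qPoch q (n - S.card)) *
        (∏ i ∈ S, t i) * rogersSzegoMV q m (n - S.card) t) := by
    intro S hS
    rw [← Finset.mul_sum,
      key_sum m n S (le_trans (Finset.card_le_card (Finset.mem_powerset.mp hS)) hn) t]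
  rw [Finset.sum_congr rfl step3, Finset.powerset_card_disjiUnion]
  refine (Finset.sum_disjiUnion _ _ _).trans ?_
  refine Finset.sum_congr rfl ?_
  intro i hi
  have step4 : ∀ S ∈ Finset.powersetCard i J,
      (-1 : RatFunc ℚ) ^ S.card * ((qPoch q n / qPoch q (n - S.card)) *
        (∏ j ∈ S, t j) * rogersSzegoMV q m (n - S.card) t) =
      (∏ j ∈ S, t j) * ((-1 : RatFunc ℚ) ^ i * (qPoch q n / qPoch q (n - i)) *
        rogersSzegoMV q m (n - i) t) := by
    intro S hS
    rw [(Finset.mem_powersetCard.mp hS).2]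
    ring
  rw [Finset.sum_congr rfl step4, ← Finset.sum_mul, Finset.esymm_map_val]
  ring
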